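/- The Shapley value of the minimum spanning tree game is 2-Lipschitz: for any graph G = (V ∪ {r}, E) with edge (r,v) for all v ∈ V, any nonnegative weight vectors w and w', the Shapley values s(w), s(w') ∈ ℝ^V of the minimum spanning tree games on (G,w) and (G,w') satisfy ‖s(w) - s(w')‖₁ ≤ 2‖w - w'‖₁. -/

import Mathlib

/-- `a` and `b` are connected using the (oriented representatives of) edges in `F`. -/
def EdgeConn {U : Type*} (F : Finset (U × U)) (a b : U) : Prop :=
  Relation.ReflTransGen (fun x y => (x, y) ∈ F ∨ (y, x) ∈ F) a b

/-- `F` is the edge set of a spanning tree of the subgraph of `(U, Es)` induced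
by the vertex set `X`. -/
def IsSpanningTree {U : Type*} (Es : Finset (U × U)) (X : Finset U)
    (F : Finset (U × U)) : Prop :=
  F ⊆ Es ∧ (∀ e ∈ F, e.1 ∈ X ∧ e.2 ∈ X) ∧
    (∀ a ∈ X, ∀ b ∈ X, EdgeConn F a b) ∧ F.card + 1 = X.card

/-- Minimum weight of a spanning tree of the induced subgraph on `X`. -/
noncomputable def OPT {U : Type*} (Es : Finset (U × U)) (X : Finset U)
    (w : U × U → ℝ) : ℝ :=
  sInf {t | ∃ F, IsSpanningTree Es X F ∧ t = ∑ e ∈ F, w e}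
/-- The characteristic function of the minimum spanning tree game:
`ν(S) = OPT(S ∪ {r})`. -/
noncomputable def mstNu {U : Type*} [DecidableEq U] (Es : Finset (U × U)) (r : U)
    (w : U × U → ℝ) (S : Finset U) : ℝ :=
  OPT Es (insert r S) w

/-- The set of agents occupying the first `k` positions of the ordering `σ`. -/
def prefixSet {U : Type*} [Fintype U] [DecidableEq U] (r : U)
    (σ : Fin (Fintype.card {u : U // u ≠ r}) ≃ {u : U // u ≠ r}) (k : ℕ) :
    Finset U :=
  (Finset.univ.filter (fun j : Fin (Fintype.card {u : U // u ≠ r}) => (j : ℕ) < k)).image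
    (fun j => (σ j : U))

/-- The Shapley value of the minimum spanning tree game. -/
noncomputable def mstShapley {U : Type*} [Fintype U] [DecidableEq U]
    (Es : Finset (U × U)) (r : U) (w : U × U → ℝ) (v : {u : U // u ≠ r}) : ℝ :=
  ((Fintype.card {u : U // u ≠ r}).factorial : ℝ)⁻¹ *
    ∑ σ : Fin (Fintype.card {u : U // u ≠ r}) ≃ {u : U // u ≠ r},
      (mstNu Es r w (insert (v : U) (prefixSet r σ (σ.symm v))) -
        mstNu Es r w (prefixSet r σ (σ.symm v)))

set_option linter.unusedSectionVars false

section Basics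
variable {U : Type*} [DecidableEq U]

lemma EdgeConn.rfl {F : Finset (U × U)} {a : U} : EdgeConn F a a :=
  Relation.ReflTransGen.refl

lemma EdgeConn.trans {F : Finset (U × U)} {a b c : U} (h : EdgeConn F a b)
    (h' : EdgeConn F b c) : EdgeConn F a c :=
  Relation.ReflTransGen.trans h h'

lemma EdgeConn.symm {F : Finset (U × U)} {a b : U} (h : EdgeConn F a b) :
    EdgeConn F b a := by
  refine (@Relation.ReflTransGen.stdSymm _ _ ⟨?_⟩).symm _ _ h
  intro x y hxy; exact hxy.symm

lemma edgeConn_of_mem {F : Finset (U × U)} {e : U × U} (he : e ∈ F) :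
    EdgeConn F e.1 e.2 :=
  Relation.ReflTransGen.single (Or.inl (by simpa using he))

lemma EdgeConn.mono {F F' : Finset (U × U)} (hFF : F ⊆ F') {a b : U}
    (h : EdgeConn F a b) : EdgeConn F' a b := by
  refine Relation.ReflTransGen.mono ?_ _ _ h
  intro x y hxy; exact hxy.imp (fun h => hFF h) (fun h => hFF h)

lemma edgeConn_empty {a b : U} (h : EdgeConn (∅ : Finset (U × U)) a b) : a = b := by
  induction h with
  | refl => rfl
  | tail _ h ih => simp at h

/-- Decomposition of connectivity upon deleting edge `e`. -/
lemma edgeConn_erase {F : Finset (U × U)} (e : U × U) {x y : U}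
    (h : EdgeConn F x y) :
    EdgeConn (F.erase e) x y ∨
      (EdgeConn (F.erase e) x e.1 ∧ EdgeConn (F.erase e) e.2 y) ∨
      (EdgeConn (F.erase e) x e.2 ∧ EdgeConn (F.erase e) e.1 y) := by
  induction h with
  | refl => exact Or.inl EdgeConn.rfl
  | @tail b c hb hbc ih =>
    have hstep : EdgeConn (F.erase e) b c ∨ ((b, c) = e ∨ (c, b) = e) := by
      rcases hbc with h1 | h1
      · rcases eq_or_ne (b, c) e with he | hne
        · exact Or.inr (Or.inl he)
        · exact Or.inl (edgeConn_of_mem (Finset.mem_erase.2 ⟨hne, h1⟩))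
      · rcases eq_or_ne (c, b) e with he | hne
        · exact Or.inr (Or.inr he)
        · exact Or.inl ((edgeConn_of_mem (Finset.mem_erase.2 ⟨hne, h1⟩)).symm)
    rcases hstep with hbc' | hbc'
    · rcases ih with h1 | ⟨h1, h2⟩ | ⟨h1, h2⟩
      · exact Or.inl (h1.trans hbc')
      · exact Or.inr (Or.inl ⟨h1, h2.trans hbc'⟩)
      · exact Or.inr (Or.inr ⟨h1, h2.trans hbc'⟩)
    · rcases hbc' with he | he
      · -- (b,c) = e : b = e.1, c = e.2
        have hb1 : b = e.1 := by rw [← he]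
        have hc2 : c = e.2 := by rw [← he]
        subst hb1; subst hc2
        rcases ih with h1 | ⟨h1, h2⟩ | ⟨h1, h2⟩
        · exact Or.inr (Or.inl ⟨h1, EdgeConn.rfl⟩)
        · exact Or.inl (h1.trans h2.symm)
        · exact Or.inl h1
      · have hc1 : c = e.1 := by rw [← he]
        have hb2 : b = e.2 := by rw [← he]
        subst hc1; subst hb2
        rcases ih with h1 | ⟨h1, h2⟩ | ⟨h1, h2⟩
        · exact Or.inr (Or.inr ⟨h1, EdgeConn.rfl⟩)
        · exact Or.inl h1
        · exact Or.inl (h1.trans h2.symm)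

/-- If `x` is connected to `e.1`, then after deleting `e`, `x` is still connected
to one of the endpoints of `e`. -/
lemma edgeConn_erase_endpoint {F : Finset (U × U)} {e : U × U} {x : U}
    (h : EdgeConn F x e.1) :
    EdgeConn (F.erase e) x e.1 ∨ EdgeConn (F.erase e) x e.2 := by
  rcases edgeConn_erase e h with h1 | ⟨h1, _⟩ | ⟨h1, h2⟩
  · exact Or.inl h1
  · exact Or.inl h1
  · exact Or.inr h1

/-- A path from inside `C` to outside `C` uses a crossing edge. -/
lemma exists_crossing_edge {F : Finset (U × U)} (C : Set U) {a b : U}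
    (h : EdgeConn F a b) (ha : a ∈ C) (hb : b ∉ C) :
    ∃ e ∈ F, (e.1 ∈ C ∧ e.2 ∉ C) ∨ (e.2 ∈ C ∧ e.1 ∉ C) := by
  induction h using Relation.ReflTransGen.head_induction_on with
  | refl => exact absurd ha hb
  | @head x c hxc hcb ih =>
    by_cases hc : c ∈ C
    · exact ih hc
    · rcases hxc with h1 | h1
      · exact ⟨(x, c), h1, Or.inl ⟨ha, hc⟩⟩
      · exact ⟨(c, x), h1, Or.inr ⟨ha, hc⟩⟩

/-- If no edge of `F` crosses `C`, walks starting in `C` stay in `C` and use only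
edges with first endpoint in `C`. -/
lemma edgeConn_restrict {F : Finset (U × U)} (C : Set U)
    [DecidablePred (· ∈ C)]
    (hcl : ∀ g ∈ F, (g.1 ∈ C ↔ g.2 ∈ C)) {x y : U} (h : EdgeConn F x y)
    (hx : x ∈ C) : EdgeConn (F.filter (fun g => g.1 ∈ C)) x y := by
  revert hx
  induction h using Relation.ReflTransGen.head_induction_on with
  | refl => exact fun _ => EdgeConn.rfl
  | @head p c hpc hcb ih =>
    intro hp
    have hc : c ∈ C := by
      rcases hpc with h1 | h1
      · exact (hcl _ h1).1 hp
      · exact (hcl _ h1).2 hp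
    have hstep : EdgeConn (F.filter (fun g => g.1 ∈ C)) p c := by
      rcases hpc with h1 | h1
      · exact edgeConn_of_mem (Finset.mem_filter.2 ⟨h1, hp⟩)
      · exact (edgeConn_of_mem (Finset.mem_filter.2 ⟨h1, hc⟩)).symm
    exact hstep.trans (ih hc)

open scoped Classical in
/-- A connected vertex set needs at least `|X| - 1` edges. -/
lemma card_le_card_edges_succ :
    ∀ (n : ℕ) (F : Finset (U × U)) (X : Finset U), F.card ≤ n →
      (∀ e ∈ F, e.1 ∈ X ∧ e.2 ∈ X) → (∀ a ∈ X, ∀ b ∈ X, EdgeConn F a b) →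
      X.card ≤ F.card + 1 := by
  intro n
  induction n with
  | zero =>
    intro F X hFn hend hconn
    have hF : F = ∅ := Finset.card_eq_zero.1 (Nat.le_zero.1 hFn)
    subst hF
    rcases X.eq_empty_or_nonempty with h | ⟨x, hx⟩
    · simp [h]
    · have : X ⊆ {x} := by
        intro y hy
        simpa using (edgeConn_empty (hconn y hy x hx))
      simpa using Finset.card_le_card this
  | succ n ih =>
    intro F X hFn hend hconn
    rcases F.eq_empty_or_nonempty with hF | ⟨e, he⟩
    · exact ih F X (by simp [hF]) hend hconn
    have he1X : e.1 ∈ X := (hend e he).1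
    have he2X : e.2 ∈ X := (hend e he).2
    set F' := F.erase e with hF'
    have hF'card : F'.card = F.card - 1 := Finset.card_erase_of_mem he
    have hF'n : F'.card ≤ n := by
      have := Finset.card_pos.2 ⟨e, he⟩
      omega
    have hend' : ∀ g ∈ F', g.1 ∈ X ∧ g.2 ∈ X := fun g hg =>
      hend g (Finset.mem_of_mem_erase hg)
    -- every vertex of X connects (in F') to e.1 or e.2
    have hdec : ∀ x ∈ X, EdgeConn F' x e.1 ∨ EdgeConn F' x e.2 := fun x hx =>
      edgeConn_erase_endpoint (hconn x hx e.1 he1X)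
    by_cases hc : EdgeConn F' e.1 e.2
    · have hconn' : ∀ a ∈ X, ∀ b ∈ X, EdgeConn F' a b := by
        intro a ha b hb
        have h1 : EdgeConn F' a e.1 := by
          rcases hdec a ha with h | h
          · exact h
          · exact h.trans hc.symm
        have h2 : EdgeConn F' b e.1 := by
          rcases hdec b hb with h | h
          · exact h
          · exact h.trans hc.symm
        exact h1.trans h2.symm
      have := ih F' X hF'n hend' hconn'
      omega
    · -- split into the component of e.1 and the rest
      set p : U → Prop := fun x => EdgeConn F' e.1 x with hp
      have hclosed : ∀ g ∈ F', (p g.1 ↔ p g.2) := by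
        intro g hg
        constructor
        · intro h; exact h.trans (edgeConn_of_mem hg)
        · intro h; exact h.trans (edgeConn_of_mem hg).symm
      have hclosed' : ∀ g ∈ F', (¬ p g.1 ↔ ¬ p g.2) := fun g hg =>
        not_congr (hclosed g hg)
      set C := X.filter p with hC
      set D := X.filter (fun x => ¬ p x) with hD
      set F1 := F'.filter (fun g => p g.1) with hF1
      set F2 := F'.filter (fun g => ¬ p g.1) with hF2
      have hF1end : ∀ g ∈ F1, g.1 ∈ C ∧ g.2 ∈ C := by
        intro g hg
        rcases Finset.mem_filter.1 hg with ⟨hgF, hg1⟩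
        exact ⟨Finset.mem_filter.2 ⟨(hend' g hgF).1, hg1⟩,
          Finset.mem_filter.2 ⟨(hend' g hgF).2, (hclosed g hgF).1 hg1⟩⟩
      have hF2end : ∀ g ∈ F2, g.1 ∈ D ∧ g.2 ∈ D := by
        intro g hg
        rcases Finset.mem_filter.1 hg with ⟨hgF, hg1⟩
        exact ⟨Finset.mem_filter.2 ⟨(hend' g hgF).1, hg1⟩,
          Finset.mem_filter.2 ⟨(hend' g hgF).2, (hclosed' g hgF).1 hg1⟩⟩
      have hF1conn : ∀ a ∈ C, ∀ b ∈ C, EdgeConn F1 a b := by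
        intro a ha b hb
        have hpa : p a := (Finset.mem_filter.1 ha).2
        have hpb : p b := (Finset.mem_filter.1 hb).2
        have : EdgeConn F' a b := hpa.symm.trans hpb
        exact edgeConn_restrict {x | p x} hclosed this hpa
      have hF2conn : ∀ a ∈ D, ∀ b ∈ D, EdgeConn F2 a b := by
        intro a ha b hb
        have hpa : ¬ p a := (Finset.mem_filter.1 ha).2
        have hpb : ¬ p b := (Finset.mem_filter.1 hb).2
        have hae2 : EdgeConn F' a e.2 := by
          rcases hdec a (Finset.mem_filter.1 ha).1 with h | h
          · exact absurd h.symm hpa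
          · exact h
        have hbe2 : EdgeConn F' b e.2 := by
          rcases hdec b (Finset.mem_filter.1 hb).1 with h | h
          · exact absurd h.symm hpb
          · exact h
        have : EdgeConn F' a b := hae2.trans hbe2.symm
        exact edgeConn_restrict {x | ¬ p x} hclosed' this hpa
      have hF1n : F1.card ≤ n := le_trans (Finset.card_le_card (Finset.filter_subset _ _)) hF'n
      have hF2n : F2.card ≤ n := le_trans (Finset.card_le_card (Finset.filter_subset _ _)) hF'n
      have h1 := ih F1 C hF1n hF1end hF1conn
      have h2 := ih F2 D hF2n hF2end hF2conn
      have hXCD : C.card + D.card = X.card := by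
        rw [hC, hD]; exact Finset.card_filter_add_card_filter_not _
      have hFF : F1.card + F2.card = F'.card := by
        rw [hF1, hF2]; exact Finset.card_filter_add_card_filter_not _
      clear_value C D F1 F2 F'
      have s1 : C.card + D.card ≤ F1.card + F2.card + 2 := by omega
      have s2 : X.card ≤ F'.card + 2 := by omega
      have s3 : 1 ≤ F.card := Finset.card_pos.2 ⟨e, he⟩
      omega

lemma card_le_of_conn {F : Finset (U × U)} {X : Finset U}
    (hend : ∀ e ∈ F, e.1 ∈ X ∧ e.2 ∈ X) (hconn : ∀ a ∈ X, ∀ b ∈ X, EdgeConn F a b) :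
    X.card ≤ F.card + 1 :=
  card_le_card_edges_succ F.card F X le_rfl hend hconn

/-- Removing an edge from a spanning tree disconnects its endpoints. -/
lemma tree_erase_not_conn {F : Finset (U × U)} {X : Finset U} {e : U × U}
    (hend : ∀ g ∈ F, g.1 ∈ X ∧ g.2 ∈ X) (hconn : ∀ a ∈ X, ∀ b ∈ X, EdgeConn F a b)
    (hcard : F.card + 1 = X.card) (he : e ∈ F) :
    ¬ EdgeConn (F.erase e) e.1 e.2 := by
  intro hc
  have hconn' : ∀ a ∈ X, ∀ b ∈ X, EdgeConn (F.erase e) a b := by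
    intro a ha b hb
    rcases edgeConn_erase e (hconn a ha b hb) with h1 | ⟨h1, h2⟩ | ⟨h1, h2⟩
    · exact h1
    · exact (h1.trans hc).trans h2
    · exact (h1.trans hc.symm).trans h2
  have hend' : ∀ g ∈ F.erase e, g.1 ∈ X ∧ g.2 ∈ X := fun g hg =>
    hend g (Finset.mem_of_mem_erase hg)
  have := card_le_of_conn hend' hconn'
  have hc1 : (F.erase e).card = F.card - 1 := Finset.card_erase_of_mem he
  have : 1 ≤ F.card := Finset.card_pos.2 ⟨e, he⟩
  omega

/-- Existence of a minimal connecting subset. -/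
lemma exists_minimal_conn :
    ∀ (n : ℕ) (F : Finset (U × U)) (a b : U), F.card ≤ n → EdgeConn F a b →
      ∃ F' ⊆ F, EdgeConn F' a b ∧ ∀ g ∈ F', ¬ EdgeConn (F'.erase g) a b := by
  intro n
  induction n with
  | zero =>
    intro F a b hFn hconn
    exact ⟨F, le_rfl, hconn, by
      intro g hg
      have : F = ∅ := Finset.card_eq_zero.1 (Nat.le_zero.1 hFn)
      simp [this] at hg⟩
  | succ n ih =>
    intro F a b hFn hconn
    by_cases h : ∀ g ∈ F, ¬ EdgeConn (F.erase g) a b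
    · exact ⟨F, le_rfl, hconn, h⟩
    · push_neg at h
      obtain ⟨g, hg, hconn'⟩ := h
      have hcard : (F.erase g).card ≤ n := by
        have hc1 : (F.erase g).card = F.card - 1 := Finset.card_erase_of_mem hg
        have : 1 ≤ F.card := Finset.card_pos.2 ⟨g, hg⟩
        omega
      obtain ⟨F', hsub, h1, h2⟩ := ih (F.erase g) a b hcard hconn'
      exact ⟨F', hsub.trans (Finset.erase_subset _ _), h1, h2⟩

/-- In a spanning tree, between two vertices there is a connection using only
edges whose removal disconnects the two vertices, and hence - if the vertices
lie on opposite sides of a cut - there is a crossing edge that separates them. -/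
lemma exists_crossing_separating {F : Finset (U × U)} {X : Finset U} {a b : U}
    (hend : ∀ g ∈ F, g.1 ∈ X ∧ g.2 ∈ X) (hconn : ∀ x ∈ X, ∀ y ∈ X, EdgeConn F x y)
    (hcard : F.card + 1 = X.card) (ha : a ∈ X) (hb : b ∈ X)
    (C : Set U) (haC : a ∈ C) (hbC : b ∉ C) :
    ∃ e ∈ F, ((e.1 ∈ C ∧ e.2 ∉ C) ∨ (e.2 ∈ C ∧ e.1 ∉ C)) ∧
      ¬ EdgeConn (F.erase e) a b := by
  obtain ⟨F', hsub, h1, h2⟩ := exists_minimal_conn F.card F a b le_rfl (hconn a ha b hb)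
  -- each edge of `F'` separates `a` from `b` even inside `F`
  have hsep : ∀ g ∈ F', ¬ EdgeConn (F.erase g) a b := by
    intro g hgF' hcon
    have hgF : g ∈ F := hsub hgF'
    have htree : ¬ EdgeConn (F.erase g) g.1 g.2 :=
      tree_erase_not_conn hend hconn hcard hgF
    have hmin : ¬ EdgeConn (F'.erase g) a b := h2 g hgF'
    have hsub' : F'.erase g ⊆ F.erase g := Finset.erase_subset_erase _ hsub
    rcases edgeConn_erase g h1 with hd | ⟨hd1, hd2⟩ | ⟨hd1, hd2⟩
    · exact hmin hd
    · -- a ~ g.1, g.2 ~ b in F'.erase g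
      exact htree (((hd1.mono hsub').symm.trans hcon).trans (hd2.mono hsub').symm)
    · exact htree ((((hd1.mono hsub').symm.trans hcon).trans (hd2.mono hsub').symm).symm)
  obtain ⟨e, heF', hcross⟩ := exists_crossing_edge C h1 haC hbC
  exact ⟨e, hsub heF', hcross, hsep e heF'⟩

end Basics



section OPTfacts
variable {U : Type*} [DecidableEq U] {Es : Finset (U × U)} {X : Finset U}

lemma treeSet_finite (Es : Finset (U × U)) (X : Finset U) (w : U × U → ℝ) :
    {t | ∃ F, IsSpanningTree Es X F ∧ t = ∑ e ∈ F, w e}.Finite := by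
  apply Set.Finite.subset ((Es.powerset.finite_toSet).image (fun F => ∑ e ∈ F, w e))
  rintro t ⟨F, hF, rfl⟩
  exact ⟨F, by simpa using hF.1, rfl⟩

lemma opt_le {F : Finset (U × U)} (hF : IsSpanningTree Es X F) (w : U × U → ℝ) :
    OPT Es X w ≤ ∑ e ∈ F, w e :=
  csInf_le (treeSet_finite Es X w).bddBelow ⟨F, hF, rfl⟩

lemma opt_spec (hex : ∃ F, IsSpanningTree Es X F) (w : U × U → ℝ) :
    ∃ F, IsSpanningTree Es X F ∧ OPT Es X w = ∑ e ∈ F, w e := by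
  obtain ⟨F0, hF0⟩ := hex
  have hne : {t | ∃ F, IsSpanningTree Es X F ∧ t = ∑ e ∈ F, w e}.Nonempty :=
    ⟨_, F0, hF0, rfl⟩
  exact (hne.csInf_mem (treeSet_finite Es X w))

/-- The star on `insert r S` is a spanning tree. -/
lemma star_tree (r : U) (S : Finset U) (hstar : ∀ v : U, v ≠ r → (r, v) ∈ Es) :
    IsSpanningTree Es (insert r S) (((insert r S).erase r).image (fun v => (r, v))) := by
  set X := insert r S with hX
  have hrX : r ∈ X := Finset.mem_insert_self _ _
  refine ⟨?_, ?_, ?_, ?_⟩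
  · intro e he
    obtain ⟨v, hv, rfl⟩ := Finset.mem_image.1 he
    exact hstar v (Finset.ne_of_mem_erase hv)
  · intro e he
    obtain ⟨v, hv, rfl⟩ := Finset.mem_image.1 he
    exact ⟨hrX, Finset.mem_of_mem_erase hv⟩
  · intro a ha b hb
    have key : ∀ x ∈ X, EdgeConn (((X.erase r)).image (fun v => (r, v))) r x := by
      intro x hx
      rcases eq_or_ne x r with rfl | hxr
      · exact EdgeConn.rfl
      · exact edgeConn_of_mem (Finset.mem_image.2 ⟨x, Finset.mem_erase.2 ⟨hxr, hx⟩, rfl⟩)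
    exact (key a ha).symm.trans (key b hb)
  · rw [Finset.card_image_of_injective _ (fun x y h => by simpa using h),
      Finset.card_erase_of_mem hrX]
    have : 1 ≤ X.card := Finset.card_pos.2 ⟨r, hrX⟩
    omega

lemma opt_singleton (w : U × U → ℝ) : OPT Es ({r} : Finset U) w = 0 := by
  have hset : {t | ∃ F, IsSpanningTree Es ({r} : Finset U) F ∧ t = ∑ e ∈ F, w e} = {0} := by
    ext t
    simp only [Set.mem_setOf_eq, Set.mem_singleton_iff]
    constructor
    · rintro ⟨F, hF, rfl⟩
      have : F.card = 0 := by have h := hF.2.2.2; rw [Finset.card_singleton] at h; omega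
      rw [Finset.card_eq_zero.1 this]; simp
    · rintro rfl
      refine ⟨∅, ⟨by simp, by simp, ?_, by simp⟩, by simp⟩
      intro a ha b hb
      simp only [Finset.mem_singleton] at ha hb
      subst ha; subst hb; exact EdgeConn.rfl
  rw [OPT, hset, csInf_singleton]

variable {f : U × U} {δ : ℝ} {w : U × U → ℝ}

lemma sum_pert (F : Finset (U × U)) :
    ∑ e ∈ F, (w e + if e = f then δ else 0)
      = (∑ e ∈ F, w e) + if f ∈ F then δ else 0 := by
  rw [Finset.sum_add_distrib]
  congr 1
  simp [Finset.sum_ite_eq']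

lemma opt_pert_le (hex : ∃ F, IsSpanningTree Es X F) (hδ : 0 ≤ δ) :
    OPT Es X w ≤ OPT Es X (fun e => w e + if e = f then δ else 0) ∧
    OPT Es X (fun e => w e + if e = f then δ else 0) ≤ OPT Es X w + δ := by
  set w' : U × U → ℝ := fun e => w e + if e = f then δ else 0 with hw'
  constructor
  · obtain ⟨F, hF, hOPT⟩ := opt_spec hex w'
    calc OPT Es X w ≤ ∑ e ∈ F, w e := opt_le hF w
      _ ≤ ∑ e ∈ F, w' e := by
          rw [hw', sum_pert]
          split <;> simp [hδ]
      _ = OPT Es X w' := hOPT.symm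
  · obtain ⟨F, hF, hOPT⟩ := opt_spec hex w
    calc OPT Es X w' ≤ ∑ e ∈ F, w' e := opt_le hF w'
      _ ≤ (∑ e ∈ F, w e) + δ := by
          rw [hw', sum_pert]
          split <;> simp [hδ]
      _ = OPT Es X w + δ := by rw [hOPT]

lemma opt_pert_vanish (hex : ∃ F, IsSpanningTree Es X F)
    (hf : f.1 ∉ X ∨ f.2 ∉ X) (hδ : 0 ≤ δ) :
    OPT Es X (fun e => w e + if e = f then δ else 0) = OPT Es X w := by
  set w' : U × U → ℝ := fun e => w e + if e = f then δ else 0 with hw'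
  have h1 := (opt_pert_le (f := f) (w := w) hex hδ).1
  obtain ⟨F, hF, hOPT⟩ := opt_spec hex w
  have hfF : f ∉ F := by
    intro hfF
    rcases hf with h | h
    · exact h (hF.2.1 f hfF).1
    · exact h (hF.2.1 f hfF).2
  have h2 : OPT Es X w' ≤ OPT Es X w := by
    calc OPT Es X w' ≤ ∑ e ∈ F, w' e := opt_le hF w'
      _ = ∑ e ∈ F, w e := by rw [hw', sum_pert]; simp [hfF]
      _ = OPT Es X w := hOPT.symm
  linarith

/-- The key exchange inequality: the marginal effect of a single-edge
perturbation is antitone in the coalition. -/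
lemma opt_exchange {Y : Finset U} (hXY : X ⊆ Y)
    (hexX : ∃ F, IsSpanningTree Es X F) (hexY : ∃ F, IsSpanningTree Es Y F)
    (hf1 : f.1 ∈ X) (hf2 : f.2 ∈ X) (hδ : 0 ≤ δ) :
    OPT Es Y (fun e => w e + if e = f then δ else 0) + OPT Es X w ≤
      OPT Es Y w + OPT Es X (fun e => w e + if e = f then δ else 0) := by
  set w' : U × U → ℝ := fun e => w e + if e = f then δ else 0 with hw'
  have hwf' : w' f = w f + δ := by rw [hw']; simp
  have hwg' : ∀ g, g ≠ f → w' g = w g := by intro g hg; rw [hw']; simp [hg]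
  obtain ⟨FY, hFY, hOY⟩ := opt_spec hexY w
  obtain ⟨FX, hFX, hOX⟩ := opt_spec hexX w'
  obtain ⟨hYsub, hYend, hYconn, hYcard⟩ := hFY
  obtain ⟨hXsub, hXend, hXconn, hXcard⟩ := hFX
  by_cases hfY : f ∈ FY
  case neg =>
    have e1 : OPT Es Y w' ≤ OPT Es Y w := by
      calc OPT Es Y w' ≤ ∑ e ∈ FY, w' e := opt_le ⟨hYsub, hYend, hYconn, hYcard⟩ w'
        _ = ∑ e ∈ FY, w e := by rw [hw', sum_pert]; simp [hfY]
        _ = OPT Es Y w := hOY.symm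
    have e2 : OPT Es X w ≤ OPT Es X w' := (opt_pert_le (f := f) (w := w) hexX hδ).1
    linarith
  case pos =>
  by_cases hfX : f ∈ FX
  case pos =>
    have e1 : OPT Es Y w' ≤ OPT Es Y w + δ := (opt_pert_le (f := f) (w := w) hexY hδ).2
    have e2 : OPT Es X w ≤ OPT Es X w' - δ := by
      calc OPT Es X w ≤ ∑ e ∈ FX, w e := opt_le ⟨hXsub, hXend, hXconn, hXcard⟩ w
        _ = (∑ e ∈ FX, w' e) - δ := by
            rw [hw', sum_pert]; simp [hfX]
        _ = OPT Es X w' - δ := by rw [hOX]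
    linarith
  case neg =>
  -- the exchange case : f ∈ FY, f ∉ FX
  classical
  set C : Set U := {x | EdgeConn (FY.erase f) f.1 x} with hC
  have haC : f.1 ∈ C := EdgeConn.rfl
  have hbC : f.2 ∉ C := tree_erase_not_conn hYend hYconn hYcard hfY
  obtain ⟨e, heFX, hcross, hsep⟩ :=
    exists_crossing_separating hXend hXconn hXcard hf1 hf2 C haC hbC
  have hef : e ≠ f := fun h => hfX (h ▸ heFX)
  have he1X : e.1 ∈ X := (hXend e heFX).1
  have he2X : e.2 ∈ X := (hXend e heFX).2
  have heEs : e ∈ Es := hXsub heFX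
  have he_not : e ∉ FY.erase f := by
    intro hmem
    have hco : EdgeConn (FY.erase f) e.1 e.2 := edgeConn_of_mem hmem
    rcases hcross with ⟨h1, h2⟩ | ⟨h1, h2⟩
    · exact h2 (EdgeConn.trans h1 hco)
    · exact h2 (EdgeConn.trans h1 hco.symm)
  -- the new Y-tree
  set GY := insert e (FY.erase f) with hGY
  have hGYsub : GY ⊆ Es := by
    rw [hGY]
    exact Finset.insert_subset heEs ((Finset.erase_subset _ _).trans hYsub)
  have hGYend : ∀ g ∈ GY, g.1 ∈ Y ∧ g.2 ∈ Y := by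
    intro g hg
    rcases Finset.mem_insert.1 hg with rfl | hg
    · exact ⟨hXY he1X, hXY he2X⟩
    · exact hYend g (Finset.mem_of_mem_erase hg)
  have hGYcard : GY.card + 1 = Y.card := by
    rw [hGY, Finset.card_insert_of_notMem he_not, Finset.card_erase_of_mem hfY]
    have : 1 ≤ FY.card := Finset.card_pos.2 ⟨f, hfY⟩
    omega
  have hsubGY : FY.erase f ⊆ GY := Finset.subset_insert _ _
  have hto : ∀ y ∈ Y, EdgeConn (FY.erase f) y f.1 ∨ EdgeConn (FY.erase f) y f.2 :=
    fun y hy => edgeConn_erase_endpoint (hYconn y hy f.1 (hXY hf1))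
  have hkey : EdgeConn GY f.1 f.2 := by
    have hestep : EdgeConn GY e.1 e.2 := edgeConn_of_mem (Finset.mem_insert_self _ _)
    rcases hcross with ⟨h1, h2⟩ | ⟨h1, h2⟩
    · -- e.1 ∈ C, e.2 ∉ C
      have ha1 : EdgeConn (FY.erase f) f.1 e.1 := h1
      have hb2 : EdgeConn (FY.erase f) e.2 f.2 := by
        rcases hto e.2 (hXY he2X) with h | h
        · exact absurd h.symm h2
        · exact h
      exact ((ha1.mono hsubGY).trans hestep).trans (hb2.mono hsubGY)
    · have ha1 : EdgeConn (FY.erase f) f.1 e.2 := h1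
      have hb2 : EdgeConn (FY.erase f) e.1 f.2 := by
        rcases hto e.1 (hXY he1X) with h | h
        · exact absurd h.symm h2
        · exact h
      exact ((ha1.mono hsubGY).trans hestep.symm).trans (hb2.mono hsubGY)
  have hGYconn : ∀ a ∈ Y, ∀ b ∈ Y, EdgeConn GY a b := by
    intro a ha b hb
    have hfa : ∀ x ∈ Y, EdgeConn GY x f.1 := by
      intro x hx
      rcases hto x hx with h | h
      · exact h.mono hsubGY
      · exact (h.mono hsubGY).trans hkey.symm
    exact (hfa a ha).trans (hfa b hb).symm
  -- the new X-tree
  set GX := insert f (FX.erase e) with hGX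
  have hGXsub : GX ⊆ Es := by
    rw [hGX]
    exact Finset.insert_subset (hYsub hfY) ((Finset.erase_subset _ _).trans hXsub)
  have hGXend : ∀ g ∈ GX, g.1 ∈ X ∧ g.2 ∈ X := by
    intro g hg
    rcases Finset.mem_insert.1 hg with rfl | hg
    · exact ⟨hf1, hf2⟩
    · exact hXend g (Finset.mem_of_mem_erase hg)
  have hf_not : f ∉ FX.erase e := fun h => hfX (Finset.mem_of_mem_erase h)
  have hGXcard : GX.card + 1 = X.card := by
    rw [hGX, Finset.card_insert_of_notMem hf_not, Finset.card_erase_of_mem heFX]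
    have : 1 ≤ FX.card := Finset.card_pos.2 ⟨e, heFX⟩
    omega
  have hsubGX : FX.erase e ⊆ GX := Finset.subset_insert _ _
  have htoX : ∀ x ∈ X, EdgeConn (FX.erase e) x e.1 ∨ EdgeConn (FX.erase e) x e.2 :=
    fun x hx => edgeConn_erase_endpoint (hXconn x hx e.1 he1X)
  have hside : (EdgeConn (FX.erase e) f.1 e.1 ∧ EdgeConn (FX.erase e) f.2 e.2) ∨
      (EdgeConn (FX.erase e) f.1 e.2 ∧ EdgeConn (FX.erase e) f.2 e.1) := by
    rcases htoX f.1 hf1 with h1 | h1 <;> rcases htoX f.2 hf2 with h2 | h2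
    · exact absurd (h1.trans h2.symm) hsep
    · exact Or.inl ⟨h1, h2⟩
    · exact Or.inr ⟨h1, h2⟩
    · exact absurd (h1.trans h2.symm) hsep
  have hGXconn : ∀ a ∈ X, ∀ b ∈ X, EdgeConn GX a b := by
    have hfstep : EdgeConn GX f.1 f.2 := edgeConn_of_mem (Finset.mem_insert_self _ _)
    have hfa : ∀ x ∈ X, EdgeConn GX x f.1 := by
      intro x hx
      rcases htoX x hx with h | h <;> rcases hside with ⟨h1, h2⟩ | ⟨h1, h2⟩
      · exact ((h.mono hsubGX)).trans (h1.mono hsubGX).symm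
      · exact (((h.mono hsubGX)).trans (h2.mono hsubGX).symm).trans hfstep.symm
      · exact (((h.mono hsubGX)).trans (h2.mono hsubGX).symm).trans hfstep.symm
      · exact ((h.mono hsubGX)).trans (h1.mono hsubGX).symm
    intro a ha b hb
    exact (hfa a ha).trans (hfa b hb).symm
  -- weight bookkeeping
  have hsum_erase_Y : ∑ g ∈ FY.erase f, w' g = ∑ g ∈ FY.erase f, w g :=
    Finset.sum_congr rfl fun g hg => hwg' g (Finset.ne_of_mem_erase hg)
  have hsum_erase_X : ∑ g ∈ FX.erase e, w' g = ∑ g ∈ FX.erase e, w g :=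
    Finset.sum_congr rfl fun g hg => hwg' g (by
      intro h; exact hfX (h ▸ Finset.mem_of_mem_erase hg))
  have hwY : ∑ g ∈ GY, w' g = (∑ g ∈ FY, w g) - w f + w e := by
    rw [hGY, Finset.sum_insert he_not, hsum_erase_Y, hwg' e hef]
    have := Finset.sum_erase_add FY w hfY
    linarith
  have hwX : ∑ g ∈ GX, w g = (∑ g ∈ FX, w' g) - w e + w f := by
    rw [hGX, Finset.sum_insert hf_not]
    have h1 : ∑ g ∈ FX, w' g = ∑ g ∈ FX, w g :=
      Finset.sum_congr rfl fun g hg => hwg' g (fun h => hfX (h ▸ hg))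
    have := Finset.sum_erase_add FX w heFX
    linarith
  have goal1 : OPT Es Y w' ≤ (∑ g ∈ FY, w g) - w f + w e := by
    rw [← hwY]; exact opt_le ⟨hGYsub, hGYend, hGYconn, hGYcard⟩ w'
  have goal2 : OPT Es X w ≤ (∑ g ∈ FX, w' g) - w e + w f := by
    rw [← hwX]; exact opt_le ⟨hGXsub, hGXend, hGXconn, hGXcard⟩ w
  rw [hOY, hOX]
  linarith

end OPTfacts

section TV

lemma tv_bound {h : ℕ → ℝ} {Q : ℕ → Prop} {δ : ℝ} (hδ : 0 ≤ δ)
    (hQmono : ∀ k, Q k → Q (k + 1))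
    (hbound : ∀ k, 0 ≤ h k ∧ h k ≤ δ)
    (hvanish : ∀ k, ¬ Q k → h k = 0)
    (hmono : ∀ k, Q k → h (k + 1) ≤ h k) (n : ℕ) :
    ∑ k ∈ Finset.range n, |h (k + 1) - h k| ≤ 2 * δ := by
  have key : ∀ m : ℕ,
      (Q m → (∑ k ∈ Finset.range m, |h (k + 1) - h k|) + h m ≤ 2 * δ) ∧
      (¬ Q m → (∑ k ∈ Finset.range m, |h (k + 1) - h k|) = 0) := by
    intro m
    induction m with
    | zero =>
      constructor
      · intro _
        simp only [Finset.range_zero, Finset.sum_empty, zero_add]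
        linarith [(hbound 0).2]
      · intro _; simp
    | succ m ih =>
      rw [Finset.sum_range_succ]
      by_cases hQm : Q m
      · have hQm1 : Q (m + 1) := hQmono m hQm
        have habs : |h (m + 1) - h m| = h m - h (m + 1) := by
          rw [abs_sub_comm]
          exact abs_of_nonneg (by linarith [hmono m hQm])
        constructor
        · intro _
          have := ih.1 hQm
          rw [habs]; linarith
        · intro hc; exact absurd hQm1 hc
      · have hzm : h m = 0 := hvanish m hQm
        have hsum0 := ih.2 hQm
        by_cases hQm1 : Q (m + 1)
        · constructor
          · intro _
            have h1 := (hbound (m + 1)).1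
            have h2 := (hbound (m + 1)).2
            rw [hsum0, hzm]
            rw [abs_of_nonneg (by linarith : (0:ℝ) ≤ h (m+1) - 0)]
            linarith
          · intro hc; exact absurd hQm1 hc
        · have hzm1 : h (m + 1) = 0 := hvanish (m + 1) hQm1
          constructor
          · intro hc; exact absurd hc hQm1
          · intro _; rw [hsum0, hzm, hzm1]; simp
  by_cases hQn : Q n
  · have := (key n).1 hQn
    linarith [(hbound n).1]
  · rw [(key n).2 hQn]
    linarith

end TV


section Prefix
variable {U : Type*} [Fintype U] [DecidableEq U] {r : U}
  {σ : Fin (Fintype.card {u : U // u ≠ r}) ≃ {u : U // u ≠ r}}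

lemma prefixSet_zero : prefixSet r σ 0 = ∅ := by
  simp [prefixSet]

lemma prefixSet_mono {k l : ℕ} (hkl : k ≤ l) : prefixSet r σ k ⊆ prefixSet r σ l := by
  intro x hx
  obtain ⟨j, hj, rfl⟩ := Finset.mem_image.1 hx
  simp only [Finset.mem_filter, Finset.mem_univ, true_and] at hj
  exact Finset.mem_image.2 ⟨j, by
    simp only [Finset.mem_filter, Finset.mem_univ, true_and]; omega, rfl⟩

lemma prefixSet_succ (k : Fin (Fintype.card {u : U // u ≠ r})) :
    prefixSet r σ ((k : ℕ) + 1) = insert ((σ k : U)) (prefixSet r σ (k : ℕ)) := by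
  have hfilter : (Finset.univ.filter
      (fun j : Fin (Fintype.card {u : U // u ≠ r}) => (j : ℕ) < (k : ℕ) + 1))
      = insert k (Finset.univ.filter
        (fun j : Fin (Fintype.card {u : U // u ≠ r}) => (j : ℕ) < (k : ℕ))) := by
    ext j
    simp only [Finset.mem_filter, Finset.mem_univ, true_and, Finset.mem_insert]
    constructor
    · intro hj
      rcases Nat.lt_succ_iff_lt_or_eq.1 hj with h | h
      · exact Or.inr (by simpa using h)
      · exact Or.inl (Fin.ext h)
    · rintro (rfl | hj)
      · omega
      · omega
  rw [prefixSet, prefixSet, hfilter, Finset.image_insert]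

end Prefix



section Shapley
variable {U : Type*} [Fintype U] [DecidableEq U] {Es : Finset (U × U)} {r : U}

lemma shapley_single (hstar : ∀ v : U, v ≠ r → (r, v) ∈ Es)
    (w : U × U → ℝ) (f : U × U) {δ : ℝ} (hδ : 0 ≤ δ) :
    ∑ v : {u : U // u ≠ r},
        |mstShapley Es r w v -
          mstShapley Es r (fun e => w e + if e = f then δ else 0) v| ≤ 2 * δ := by
  classical
  set n := Fintype.card {u : U // u ≠ r} with hn
  set w' : U × U → ℝ := fun e => w e + if e = f then δ else 0 with hw'
  have hex : ∀ S : Finset U, ∃ F, IsSpanningTree Es (insert r S) F :=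
    fun S => ⟨_, star_tree r S hstar⟩
  -- the total variation bound for a fixed ordering
  have hσ : ∀ σ : Fin n ≃ {u : U // u ≠ r},
      ∑ v : {u : U // u ≠ r},
        |(mstNu Es r w (insert (v : U) (prefixSet r σ (σ.symm v))) -
            mstNu Es r w (prefixSet r σ (σ.symm v))) -
          (mstNu Es r w' (insert (v : U) (prefixSet r σ (σ.symm v))) -
            mstNu Es r w' (prefixSet r σ (σ.symm v)))| ≤ 2 * δ := by
    intro σ
    set h : ℕ → ℝ := fun j =>
      OPT Es (insert r (prefixSet r σ j)) w' - OPT Es (insert r (prefixSet r σ j)) w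
      with hh
    set Q : ℕ → Prop := fun j =>
      f.1 ∈ insert r (prefixSet r σ j) ∧ f.2 ∈ insert r (prefixSet r σ j) with hQ
    have hterm : ∀ v : {u : U // u ≠ r},
        |(mstNu Es r w (insert (v : U) (prefixSet r σ (σ.symm v))) -
            mstNu Es r w (prefixSet r σ (σ.symm v))) -
          (mstNu Es r w' (insert (v : U) (prefixSet r σ (σ.symm v))) -
            mstNu Es r w' (prefixSet r σ (σ.symm v)))|
          = |h (((σ.symm v : Fin n) : ℕ) + 1) - h ((σ.symm v : Fin n) : ℕ)| := by
      intro v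
      have hins : insert (v : U) (prefixSet r σ ((σ.symm v : Fin n) : ℕ))
          = prefixSet r σ (((σ.symm v : Fin n) : ℕ) + 1) := by
        rw [prefixSet_succ (σ.symm v), Equiv.apply_symm_apply]
      rw [hh]
      simp only [mstNu, hins]
      rw [show
        (OPT Es (insert r (prefixSet r σ (((σ.symm v : Fin n) : ℕ) + 1))) w -
            OPT Es (insert r (prefixSet r σ ((σ.symm v : Fin n) : ℕ))) w) -
          (OPT Es (insert r (prefixSet r σ (((σ.symm v : Fin n) : ℕ) + 1))) w' -
            OPT Es (insert r (prefixSet r σ ((σ.symm v : Fin n) : ℕ))) w')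
        = -((OPT Es (insert r (prefixSet r σ (((σ.symm v : Fin n) : ℕ) + 1))) w' -
            OPT Es (insert r (prefixSet r σ (((σ.symm v : Fin n) : ℕ) + 1))) w) -
          (OPT Es (insert r (prefixSet r σ ((σ.symm v : Fin n) : ℕ))) w' -
            OPT Es (insert r (prefixSet r σ ((σ.symm v : Fin n) : ℕ))) w)) by ring,
        abs_neg]
    calc ∑ v : {u : U // u ≠ r}, _ = ∑ v : {u : U // u ≠ r},
          |h (((σ.symm v : Fin n) : ℕ) + 1) - h ((σ.symm v : Fin n) : ℕ)| :=
        Finset.sum_congr rfl (fun v _ => hterm v)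
      _ = ∑ k : Fin n, |h ((k : ℕ) + 1) - h (k : ℕ)| :=
        Equiv.sum_comp σ.symm (fun k : Fin n => |h ((k : ℕ) + 1) - h (k : ℕ)|)
      _ = ∑ j ∈ Finset.range n, |h (j + 1) - h j| :=
        Fin.sum_univ_eq_sum_range (fun j => |h (j + 1) - h j|) n
      _ ≤ 2 * δ := by
        refine tv_bound (Q := Q) hδ ?_ ?_ ?_ ?_ n
        · -- Q monotone
          intro k hk
          simp only [hQ] at hk ⊢
          have hsub : insert r (prefixSet r σ k) ⊆ insert r (prefixSet r σ (k + 1)) :=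
            Finset.insert_subset_insert _ (prefixSet_mono (Nat.le_succ k))
          exact ⟨hsub hk.1, hsub hk.2⟩
        · intro k
          have h1 := (opt_pert_le (f := f) (w := w) (hex (prefixSet r σ k)) hδ).1
          have h2 := (opt_pert_le (f := f) (w := w) (hex (prefixSet r σ k)) hδ).2
          simp only [hh]
          constructor <;> linarith
        · intro k hk
          simp only [hh]
          rw [opt_pert_vanish (hex _) (by
            simp only [hQ] at hk; push_neg at hk
            by_cases h1 : f.1 ∈ insert r (prefixSet r σ k)
            · exact Or.inr (hk h1)
            · exact Or.inl h1) hδ]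
          ring
        · intro k hk
          have hsub : insert r (prefixSet r σ k) ⊆ insert r (prefixSet r σ (k + 1)) :=
            Finset.insert_subset_insert _ (prefixSet_mono (Nat.le_succ k))
          simp only [hQ] at hk
          have := opt_exchange (w := w) hsub (hex _) (hex _) hk.1 hk.2 hδ
          simp only [hh]
          linarith
  -- assemble
  have hfac : (0:ℝ) < (n.factorial : ℝ) := by positivity
  have hcard : Fintype.card (Fin n ≃ {u : U // u ≠ r}) = n.factorial := by
    rw [Fintype.card_equiv ((Fintype.equivFinOfCardEq (by rw [hn]) :
      {u : U // u ≠ r} ≃ Fin n).symm)]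
    simp
  calc ∑ v : {u : U // u ≠ r}, |mstShapley Es r w v - mstShapley Es r w' v|
      = ∑ v : {u : U // u ≠ r}, (n.factorial : ℝ)⁻¹ *
          |∑ σ : Fin n ≃ {u : U // u ≠ r},
            ((mstNu Es r w (insert (v : U) (prefixSet r σ (σ.symm v))) -
              mstNu Es r w (prefixSet r σ (σ.symm v))) -
            (mstNu Es r w' (insert (v : U) (prefixSet r σ (σ.symm v))) -
              mstNu Es r w' (prefixSet r σ (σ.symm v))))| := by
        apply Finset.sum_congr rfl
        intro v _
        rw [mstShapley, mstShapley, ← mul_sub, abs_mul, ← Finset.sum_sub_distrib]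
        congr 1
        rw [abs_of_nonneg (by positivity)]
    _ ≤ ∑ v : {u : U // u ≠ r}, (n.factorial : ℝ)⁻¹ *
          ∑ σ : Fin n ≃ {u : U // u ≠ r},
            |(mstNu Es r w (insert (v : U) (prefixSet r σ (σ.symm v))) -
              mstNu Es r w (prefixSet r σ (σ.symm v))) -
            (mstNu Es r w' (insert (v : U) (prefixSet r σ (σ.symm v))) -
              mstNu Es r w' (prefixSet r σ (σ.symm v)))| := by
        apply Finset.sum_le_sum
        intro v _
        exact mul_le_mul_of_nonneg_left (Finset.abs_sum_le_sum_abs _ _) (by positivity)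
    _ = (n.factorial : ℝ)⁻¹ * ∑ σ : Fin n ≃ {u : U // u ≠ r},
          ∑ v : {u : U // u ≠ r},
            |(mstNu Es r w (insert (v : U) (prefixSet r σ (σ.symm v))) -
              mstNu Es r w (prefixSet r σ (σ.symm v))) -
            (mstNu Es r w' (insert (v : U) (prefixSet r σ (σ.symm v))) -
              mstNu Es r w' (prefixSet r σ (σ.symm v)))| := by
        rw [← Finset.mul_sum, Finset.sum_comm]
    _ ≤ (n.factorial : ℝ)⁻¹ * ∑ _σ : Fin n ≃ {u : U // u ≠ r}, 2 * δ := by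
        apply mul_le_mul_of_nonneg_left _ (by positivity)
        exact Finset.sum_le_sum (fun σ _ => hσ σ)
    _ = 2 * δ := by
        rw [Finset.sum_const, Finset.card_univ, hcard, nsmul_eq_mul]
        field_simp

end Shapley

section Assemble
variable {U : Type*} [Fintype U] [DecidableEq U] {Es : Finset (U × U)} {r : U}

lemma OPT_congr {X : Finset U} {w1 w2 : U × U → ℝ} (hw : ∀ e ∈ Es, w1 e = w2 e) :
    OPT Es X w1 = OPT Es X w2 := by
  have hset : {t | ∃ F, IsSpanningTree Es X F ∧ t = ∑ e ∈ F, w1 e}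
      = {t | ∃ F, IsSpanningTree Es X F ∧ t = ∑ e ∈ F, w2 e} := by
    ext t
    constructor
    · rintro ⟨F, hF, rfl⟩
      exact ⟨F, hF, Finset.sum_congr rfl (fun e he => hw e (hF.1 he))⟩
    · rintro ⟨F, hF, rfl⟩
      exact ⟨F, hF, (Finset.sum_congr rfl (fun e he => hw e (hF.1 he))).symm⟩
  rw [OPT, OPT, hset]

lemma mstShapley_congr {w1 w2 : U × U → ℝ} (hw : ∀ e ∈ Es, w1 e = w2 e)
    (v : {u : U // u ≠ r}) : mstShapley Es r w1 v = mstShapley Es r w2 v := by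
  rw [mstShapley, mstShapley]
  congr 1
  apply Finset.sum_congr rfl
  intro σ _
  rw [mstNu, mstNu, mstNu, mstNu, OPT_congr hw, OPT_congr hw]

lemma shapley_single_abs (hstar : ∀ v : U, v ≠ r → (r, v) ∈ Es)
    (w : U × U → ℝ) (f : U × U) (d : ℝ) :
    ∑ v : {u : U // u ≠ r},
        |mstShapley Es r w v -
          mstShapley Es r (fun e => w e + if e = f then d else 0) v| ≤ 2 * |d| := by
  rcases le_or_gt 0 d with hd | hd
  · rw [abs_of_nonneg hd]
    exact shapley_single hstar w f hd
  · set w2 : U × U → ℝ := fun e => w e + if e = f then d else 0 with hw2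
    have hback : w = fun e => w2 e + if e = f then -d else 0 := by
      funext e
      rw [hw2]
      by_cases he : e = f <;> simp [he]
    have h1 : ∑ v : {u : U // u ≠ r},
        |mstShapley Es r w2 v -
          mstShapley Es r (fun e => w2 e + if e = f then -d else 0) v| ≤ 2 * -d :=
      shapley_single hstar w2 f (by linarith)
    rw [abs_of_neg hd]
    calc ∑ v : {u : U // u ≠ r}, |mstShapley Es r w v - mstShapley Es r w2 v|
        = ∑ v : {u : U // u ≠ r},
          |mstShapley Es r w2 v -
            mstShapley Es r (fun e => w2 e + if e = f then -d else 0) v| := by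
          apply Finset.sum_congr rfl
          intro v _
          rw [abs_sub_comm]
          congr 2
          exact congrArg (fun ww => mstShapley Es r ww v) hback
      _ ≤ 2 * -d := h1

lemma shapley_interp (hstar : ∀ v : U, v ≠ r → (r, v) ∈ Es)
    (w w' : U × U → ℝ) (A : Finset (U × U)) :
    ∑ v : {u : U // u ≠ r},
        |mstShapley Es r w v -
          mstShapley Es r (fun e => if e ∈ A then w' e else w e) v|
      ≤ 2 * ∑ e ∈ A, |w e - w' e| := by
  classical
  induction A using Finset.induction_on with
  | empty =>
    simp only [Finset.notMem_empty, if_false, Finset.sum_empty, mul_zero]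
    simp
  | @insert f A hfA ih =>
    set mid : U × U → ℝ := fun e => if e ∈ A then w' e else w e with hmid
    set d : ℝ := w' f - w f with hd
    have hfun : (fun e => if e ∈ insert f A then w' e else w e)
        = fun e => mid e + if e = f then d else 0 := by
      funext e
      rw [hmid, hd]
      by_cases hef : e = f
      · subst hef
        simp [hfA]
      · by_cases heA : e ∈ A <;> simp [hef, heA]
    have htri : ∑ v : {u : U // u ≠ r},
        |mstShapley Es r w v -
          mstShapley Es r (fun e => if e ∈ insert f A then w' e else w e) v|
        ≤ (∑ v : {u : U // u ≠ r}, |mstShapley Es r w v - mstShapley Es r mid v|)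
          + ∑ v : {u : U // u ≠ r},
            |mstShapley Es r mid v -
              mstShapley Es r (fun e => mid e + if e = f then d else 0) v| := by
      rw [← Finset.sum_add_distrib]
      apply Finset.sum_le_sum
      intro v _
      rw [hfun]
      exact abs_sub_le _ _ _
    have hstep := shapley_single_abs (r := r) hstar mid f d
    have habs : |d| = |w f - w' f| := by rw [hd, abs_sub_comm]
    rw [Finset.sum_insert hfA]
    calc ∑ v : {u : U // u ≠ r},
        |mstShapley Es r w v -
          mstShapley Es r (fun e => if e ∈ insert f A then w' e else w e) v|
        ≤ _ + _ := htri
      _ ≤ 2 * ∑ e ∈ A, |w e - w' e| + 2 * |w f - w' f| := by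
          rw [← habs]
          exact add_le_add ih hstep
      _ = 2 * (|w f - w' f| + ∑ e ∈ A, |w e - w' e|) := by ring

end Assemble

theorem stmt_13 {U : Type*} [Fintype U] [DecidableEq U]
    (Es : Finset (U × U)) (r : U)
    (hstar : ∀ v : U, v ≠ r → (r, v) ∈ Es)
    (w w' : U × U → ℝ) (hw : ∀ e, 0 ≤ w e) (hw' : ∀ e, 0 ≤ w' e) :
    ∑ v : {u : U // u ≠ r}, |mstShapley Es r w v - mstShapley Es r w' v|
      ≤ 2 * ∑ e ∈ Es, |w e - w' e| := by
  have hmid : ∀ v : {u : U // u ≠ r},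
      mstShapley Es r (fun e => if e ∈ Es then w' e else w e) v
        = mstShapley Es r w' v :=
    fun v => mstShapley_congr (fun e he => by simp [he]) v
  calc ∑ v : {u : U // u ≠ r}, |mstShapley Es r w v - mstShapley Es r w' v|
      = ∑ v : {u : U // u ≠ r},
        |mstShapley Es r w v -
          mstShapley Es r (fun e => if e ∈ Es then w' e else w e) v| := by
        apply Finset.sum_congr rfl
        intro v _
        rw [hmid v]
    _ ≤ 2 * ∑ e ∈ Es, |w e - w' e| := shapley_interp hstar w w' Es
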